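/- Let n ≥ 1 be an integer, k an integer with 0 ≤ k < n, and S > 0 a real. Let p₀, p₁, …, p_n be reals in (0, 1/2] satisfying p_i ≥ p_{i−1}·Q(√(nS/(2·p_{i−1}))) for every 1 ≤ i ≤ n. Then 2·p_n/(n·S) ≥ 1/g_{n−k}(max{n·S/(2·p_k), 9}). In particular, taking k = 0 and p₀ = 1/2, p_n ≥ (nS/2)/g_n(max{nS, 9}). -/

import Mathlib

open Set MeasureTheory Filter

/-- The standard Gaussian tail function `Q(x) = (1/√(2π)) ∫_x^∞ exp(−z²/2) dz`. -/
noncomputable def gaussQ (x : ℝ) : ℝ :=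
  (Real.sqrt (2 * Real.pi))⁻¹ * ∫ z in Set.Ioi x, Real.exp (-z ^ 2 / 2)

/-- The `i`-fold iterated exponential: `g 0 x = x` and `g (i+1) x = exp (g i x)`. -/
noncomputable def iterExp : ℕ → ℝ → ℝ
  | 0, x => x
  | (i + 1), x => Real.exp (iterExp i x)

lemma gauss_integrableOn (t : ℝ) :
    IntegrableOn (fun z : ℝ => Real.exp (-z ^ 2 / 2)) (Ioi t) := by
  have h := (integrable_exp_neg_mul_sq (by norm_num : (0:ℝ) < 1/2)).integrableOn
    (s := Ioi t)
  refine h.congr_fun (fun z _ => by ring_nf) measurableSet_Ioi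

lemma gauss_tail_eq (t : ℝ) (ht : 0 < t) :
    ∫ z in Ioi t, Real.exp (-z ^ 2 / 2) * (1 - 3 / z ^ 4)
      = Real.exp (-t ^ 2 / 2) * (1 / t - 1 / t ^ 3) := by
  have key : ∀ z ∈ Ici t, HasDerivAt (fun z : ℝ => -(Real.exp (-z ^ 2 / 2) * (1 / z - 1 / z ^ 3)))
      (Real.exp (-z ^ 2 / 2) * (1 - 3 / z ^ 4)) z := by
    intro z hz
    have hzpos : 0 < z := lt_of_lt_of_le ht hz
    have hz0 : z ≠ 0 := ne_of_gt hzpos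
    have h1 : HasDerivAt (fun z : ℝ => Real.exp (-z ^ 2 / 2)) (Real.exp (-z ^ 2 / 2) * (-z)) z := by
      have hin : HasDerivAt (fun z : ℝ => -z ^ 2 / 2) (-z) z := by
        have h := ((hasDerivAt_pow 2 z).neg).div_const 2
        convert h using 1 <;> try rfl
        push_cast; ring
      exact (Real.hasDerivAt_exp _).comp z hin
    have h2 : HasDerivAt (fun z : ℝ => 1 / z - 1 / z ^ 3) (-1 / z ^ 2 + 3 / z ^ 4) z := by
      have ha : HasDerivAt (fun z : ℝ => 1 / z) (-1 / z ^ 2) z := by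
        simp only [one_div]
        simpa [neg_div] using hasDerivAt_inv hz0
      have hb : HasDerivAt (fun z : ℝ => 1 / z ^ 3) (-3 / z ^ 4) z := by
        simp only [one_div]
        have h := (hasDerivAt_pow 3 z).inv (by positivity)
        convert h using 1 <;> try rfl
        field_simp; ring
      have h := ha.sub hb
      convert h using 1 <;> try rfl
      ring
    have h := (h1.mul h2).neg
    convert h using 1 <;> try rfl
    field_simp
    ring
  have hint : IntegrableOn (fun z : ℝ => Real.exp (-z ^ 2 / 2) * (1 - 3 / z ^ 4)) (Ioi t) := by
    refine Integrable.mono' ((gauss_integrableOn t).const_mul (1 + 3 / t ^ 4)) ?_ ?_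
    · refine (Continuous.continuousOn (by continuity)).mul ?_ |>.aestronglyMeasurable
        measurableSet_Ioi
      exact ContinuousOn.sub continuousOn_const <| ContinuousOn.div continuousOn_const
        (Continuous.continuousOn (by continuity))
        (fun z hz => by have : 0 < z := lt_trans ht hz; positivity)
    · filter_upwards [ae_restrict_mem measurableSet_Ioi] with z hz
      have hzt : t < z := hz
      have hz0 : 0 < z := lt_trans ht hzt
      rw [norm_mul, Real.norm_eq_abs, Real.norm_eq_abs, Real.abs_exp]
      have h34 : |1 - 3 / z ^ 4| ≤ 1 + 3 / t ^ 4 := by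
        have hle : 3 / z ^ 4 ≤ 3 / t ^ 4 := by
          apply div_le_div_of_nonneg_left (by norm_num) (by positivity)
          exact pow_le_pow_left₀ ht.le hzt.le 4
        have hge : (0:ℝ) ≤ 3 / z ^ 4 := by positivity
        rw [abs_le]
        constructor <;> nlinarith [div_nonneg (by norm_num : (0:ℝ) ≤ 3) (pow_nonneg ht.le 4)]
      calc Real.exp (-z ^ 2 / 2) * |1 - 3 / z ^ 4|
          ≤ Real.exp (-z ^ 2 / 2) * (1 + 3 / t ^ 4) :=
            mul_le_mul_of_nonneg_left h34 (Real.exp_pos _).le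
        _ = (1 + 3 / t ^ 4) * Real.exp (-z ^ 2 / 2) := by ring
  have hsq : Tendsto (fun z : ℝ => z ^ 2 / 2) atTop atTop :=
    (tendsto_pow_atTop (by norm_num : 2 ≠ 0)).atTop_div_const (by norm_num)
  have h1 : Tendsto (fun z : ℝ => Real.exp (-z ^ 2 / 2)) atTop (nhds 0) := by
    have h := Real.tendsto_exp_neg_atTop_nhds_zero.comp hsq
    simpa [Function.comp_def, neg_div] using h
  have h2 : Tendsto (fun z : ℝ => 1 / z - 1 / z ^ 3) atTop (nhds 0) := by
    have ha : Tendsto (fun z : ℝ => z⁻¹) atTop (nhds 0) := tendsto_inv_atTop_zero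
    have hb : Tendsto (fun z : ℝ => (z ^ 3)⁻¹) atTop (nhds 0) :=
      tendsto_inv_atTop_zero.comp (tendsto_pow_atTop (by norm_num : 3 ≠ 0))
    simpa [one_div] using ha.sub hb
  have hlim : Tendsto (fun z : ℝ => -(Real.exp (-z ^ 2 / 2) * (1 / z - 1 / z ^ 3)))
      atTop (nhds 0) := by simpa using (h1.mul h2).neg
  have heq := integral_Ioi_of_hasDerivAt_of_tendsto' key hint hlim
  rw [heq]; ring


lemma hint_mod (t : ℝ) (ht : 0 < t) :
    IntegrableOn (fun z : ℝ => Real.exp (-z ^ 2 / 2) * (1 - 3 / z ^ 4)) (Ioi t) := by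
  refine Integrable.mono' ((gauss_integrableOn t).const_mul (1 + 3 / t ^ 4)) ?_ ?_
  · refine (Continuous.continuousOn (by continuity)).mul ?_ |>.aestronglyMeasurable
      measurableSet_Ioi
    exact ContinuousOn.sub continuousOn_const <| ContinuousOn.div continuousOn_const
      (Continuous.continuousOn (by continuity))
      (fun z hz => by have : 0 < z := lt_trans ht hz; positivity)
  · filter_upwards [ae_restrict_mem measurableSet_Ioi] with z hz
    have hzt : t < z := hz
    have hz0 : 0 < z := lt_trans ht hzt
    rw [norm_mul, Real.norm_eq_abs, Real.norm_eq_abs, Real.abs_exp]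
    have h34 : |1 - 3 / z ^ 4| ≤ 1 + 3 / t ^ 4 := by
      have hle : 3 / z ^ 4 ≤ 3 / t ^ 4 := by
        apply div_le_div_of_nonneg_left (by norm_num) (by positivity)
        exact pow_le_pow_left₀ ht.le hzt.le 4
      have hge : (0:ℝ) ≤ 3 / z ^ 4 := by positivity
      rw [abs_le]
      constructor <;> nlinarith [div_nonneg (by norm_num : (0:ℝ) ≤ 3) (pow_nonneg ht.le 4)]
    calc Real.exp (-z ^ 2 / 2) * |1 - 3 / z ^ 4|
        ≤ Real.exp (-z ^ 2 / 2) * (1 + 3 / t ^ 4) :=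
          mul_le_mul_of_nonneg_left h34 (Real.exp_pos _).le
      _ = (1 + 3 / t ^ 4) * Real.exp (-z ^ 2 / 2) := by ring

lemma gaussQ_ge (t : ℝ) (ht : 0 < t) :
    (Real.sqrt (2 * Real.pi))⁻¹ * (Real.exp (-t ^ 2 / 2) * (1 / t - 1 / t ^ 3)) ≤ gaussQ t := by
  unfold gaussQ
  have hc : (0:ℝ) ≤ (Real.sqrt (2 * Real.pi))⁻¹ := by positivity
  apply mul_le_mul_of_nonneg_left _ hc
  rw [← gauss_tail_eq t ht]
  apply setIntegral_mono_on (hint_mod t ht) (gauss_integrableOn t) measurableSet_Ioi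
  intro z hz
  have hz0 : 0 < z := lt_trans ht hz
  have : (0:ℝ) ≤ 3 / z ^ 4 := by positivity
  nlinarith [Real.exp_pos (-z ^ 2 / 2)]

lemma gaussQ_anti {a b : ℝ} (hab : a ≤ b) : gaussQ b ≤ gaussQ a := by
  unfold gaussQ
  have hc : (0:ℝ) ≤ (Real.sqrt (2 * Real.pi))⁻¹ := by positivity
  apply mul_le_mul_of_nonneg_left _ hc
  apply setIntegral_mono_set (gauss_integrableOn a)
  · filter_upwards with z using (Real.exp_pos _).le
  · filter_upwards with z hz using lt_of_le_of_lt hab hz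

lemma exp_sq_eq (y : ℝ) : Real.exp y ^ 2 = Real.exp (2 * y) := by
  rw [sq, ← Real.exp_add]; ring_nf

lemma exp_nine_ge : (8103 : ℝ) ≤ Real.exp 9 := by
  have h := Real.exp_one_gt_d9
  have h2 : (2.7182818283 : ℝ) ^ 9 ≤ Real.exp 1 ^ 9 :=
    pow_le_pow_left₀ (by norm_num) h.le 9
  have h3 : Real.exp 1 ^ 9 = Real.exp 9 := by
    rw [← Real.exp_nat_mul]; norm_num
  nlinarith [h2, h3]

lemma exp_three_ge : (18 : ℝ) ≤ Real.exp 3 := by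
  have h := Real.exp_one_gt_d9
  have h2 : (2.7182818283 : ℝ) ^ 3 ≤ Real.exp 1 ^ 3 :=
    pow_le_pow_left₀ (by norm_num) h.le 3
  have h3 : Real.exp 1 ^ 3 = Real.exp 3 := by
    rw [← Real.exp_nat_mul]; norm_num
  nlinarith [h2, h3]

lemma exp_ge_cube {x : ℝ} (hx : 9 ≤ x) : 8 * x ^ 3 ≤ Real.exp x := by
  have hy : 2 * x ≤ Real.exp (x / 3) := by
    have h1 : Real.exp (x / 3) = Real.exp 3 * Real.exp (x / 3 - 3) := by
      rw [← Real.exp_add]; ring_nf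
    have h2 : x / 3 - 3 + 1 ≤ Real.exp (x / 3 - 3) := Real.add_one_le_exp _
    have h3 := exp_three_ge
    rw [h1]
    nlinarith [Real.exp_pos (x / 3 - 3)]
  have h4 : Real.exp x = Real.exp (x / 3) ^ 3 := by
    rw [← Real.exp_nat_mul]; congr 1; push_cast; ring
  rw [h4]
  calc 8 * x ^ 3 = (2 * x) ^ 3 := by ring
    _ ≤ Real.exp (x / 3) ^ 3 := pow_le_pow_left₀ (by nlinarith) hy 3

lemma sq_le_imp {a b : ℝ} (ha : 0 ≤ a) (hb : 0 ≤ b) (h : a ^ 2 ≤ b ^ 2) : a ≤ b := by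
  nlinarith

lemma key_bound (x : ℝ) (hx : 0 < x) :
    x * Real.exp (-(max x 9)) ≤ gaussQ (Real.sqrt x) := by
  set s := Real.sqrt (2 * Real.pi) with hs_def
  have hs : (0:ℝ) < s := Real.sqrt_pos.mpr (by positivity)
  have hs2 : s ^ 2 = 2 * Real.pi := Real.sq_sqrt (by positivity)
  have hpi : Real.pi < 3.15 := Real.pi_lt_d2
  have hpi0 : 3 < Real.pi := Real.pi_gt_three
  rcases le_total x 9 with hx9 | hx9
  · -- small case: x ≤ 9
    rw [max_eq_right hx9]
    have hmono : gaussQ 3 ≤ gaussQ (Real.sqrt x) := by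
      apply gaussQ_anti
      have h9 : Real.sqrt 9 = 3 := by
        rw [show (9:ℝ) = 3 ^ 2 by norm_num, Real.sqrt_sq (by norm_num : (0:ℝ) ≤ 3)]
      calc Real.sqrt x ≤ Real.sqrt 9 := Real.sqrt_le_sqrt hx9
        _ = 3 := h9
    have hq3 : s⁻¹ * (Real.exp (-(9:ℝ)/2) * (8/27)) ≤ gaussQ 3 := by
      have h := gaussQ_ge 3 (by norm_num)
      have e1 : (-(3:ℝ) ^ 2 / 2) = -(9:ℝ)/2 := by norm_num
      have e2 : (1/(3:ℝ) - 1/3^3) = 8/27 := by norm_num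
      rw [e1, e2] at h
      exact h
    -- numeric: 9 * exp(-9) ≤ s⁻¹ * (exp(-9/2) * (8/27))
    have hstep : 9 * s ≤ Real.exp ((9:ℝ)/2) * (8/27) := by
      apply sq_le_imp (by positivity) (by positivity)
      have he : Real.exp ((9:ℝ)/2) ^ 2 = Real.exp 9 := by
        rw [exp_sq_eq]; norm_num
      nlinarith [exp_nine_ge, hs2, hpi]
    have hfac : (0:ℝ) ≤ s⁻¹ * Real.exp (-(9:ℝ)) := by positivity
    have h6 := mul_le_mul_of_nonneg_left hstep hfac
    have he2 : Real.exp (-(9:ℝ)) * Real.exp ((9:ℝ)/2) = Real.exp (-(9:ℝ)/2) := by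
      rw [← Real.exp_add]; norm_num
    have hnum : 9 * Real.exp (-(9:ℝ)) ≤ s⁻¹ * (Real.exp (-(9:ℝ)/2) * (8/27)) := by
      calc 9 * Real.exp (-(9:ℝ))
          = (s⁻¹ * Real.exp (-(9:ℝ))) * (9 * s) := by field_simp
        _ ≤ (s⁻¹ * Real.exp (-(9:ℝ))) * (Real.exp ((9:ℝ)/2) * (8/27)) := h6
        _ = s⁻¹ * ((Real.exp (-(9:ℝ)) * Real.exp ((9:ℝ)/2)) * (8/27)) := by ring
        _ = s⁻¹ * (Real.exp (-(9:ℝ)/2) * (8/27)) := by rw [he2]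
    have hxe : x * Real.exp (-(9:ℝ)) ≤ 9 * Real.exp (-(9:ℝ)) :=
      mul_le_mul_of_nonneg_right hx9 (Real.exp_pos _).le
    calc x * Real.exp (-(9:ℝ)) ≤ 9 * Real.exp (-(9:ℝ)) := hxe
      _ ≤ s⁻¹ * (Real.exp (-(9:ℝ)/2) * (8/27)) := hnum
      _ ≤ gaussQ 3 := hq3
      _ ≤ gaussQ (Real.sqrt x) := hmono
  · -- large case: 9 ≤ x
    rw [max_eq_left hx9]
    set t := Real.sqrt x with ht_def
    have ht : 0 < t := Real.sqrt_pos.mpr hx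
    have ht2 : t ^ 2 = x := Real.sq_sqrt hx.le
    have ht3 : t ^ 3 = x * t := by rw [pow_succ, ht2]
    have h := gaussQ_ge t ht
    rw [ht2] at h
    have hfrac : 1/t - 1/t^3 = (x - 1)/(x * t) := by
      rw [ht3]
      field_simp
    rw [hfrac] at h
    refine le_trans ?_ h
    -- need: x * exp(-x) ≤ s⁻¹ * (exp(-x/2) * ((x-1)/(x*t)))
    have h1 : s * x ^ 2 * t ≤ Real.exp (x/2) * (x - 1) := by
      apply sq_le_imp (by positivity)
        (mul_nonneg (Real.exp_pos _).le (by linarith))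
      have he : Real.exp (x/2) ^ 2 = Real.exp x := by
        rw [exp_sq_eq]; ring_nf
      have lhs_eq : (s * x^2 * t)^2 = 2 * Real.pi * x^5 := by
        have h0 : (s * x^2 * t)^2 = s^2 * (x^2)^2 * t^2 := by ring
        rw [h0, hs2, ht2]; ring
      have rhs_eq : (Real.exp (x/2) * (x-1))^2 = Real.exp x * (x-1)^2 := by
        rw [mul_pow, he]
      rw [lhs_eq, rhs_eq]
      have hxx : 8/9 * x ≤ x - 1 := by linarith
      have hsq : (8/9 * x) ^ 2 ≤ (x - 1) ^ 2 :=
        pow_le_pow_left₀ (by nlinarith) hxx 2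
      have hA : 8 * x^3 * ((8/9) * x)^2 ≤ Real.exp x * (x-1)^2 := by
        have h1 := exp_ge_cube hx9
        nlinarith [Real.exp_pos x]
      have hpix : Real.pi * x^5 ≤ 3.15 * x^5 :=
        mul_le_mul_of_nonneg_right hpi.le (by positivity)
      nlinarith [hA, hpix]
    have hc0 : (0:ℝ) < s⁻¹ * Real.exp (-x) / (x * t) := by positivity
    have h6 := mul_le_mul_of_nonneg_right h1 hc0.le
    have he2 : Real.exp (x/2) * Real.exp (-x) = Real.exp (-x/2) := by
      rw [← Real.exp_add]; ring_nf
    calc x * Real.exp (-x)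
        = (s * x ^ 2 * t) * (s⁻¹ * Real.exp (-x) / (x * t)) := by
          field_simp
      _ ≤ (Real.exp (x/2) * (x - 1)) * (s⁻¹ * Real.exp (-x) / (x * t)) := h6
      _ = (Real.exp (x/2) * Real.exp (-x)) * ((x - 1) * s⁻¹ / (x * t)) := by ring
      _ = Real.exp (-x/2) * ((x - 1) * s⁻¹ / (x * t)) := by rw [he2]
      _ = s⁻¹ * (Real.exp (-x/2) * ((x - 1)/(x * t))) := by ring

lemma iterExp_ge_nine {M : ℝ} (hM : 9 ≤ M) : ∀ j, 9 ≤ iterExp j M := by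
  intro j
  induction j with
  | zero => exact hM
  | succ j ih =>
    have := Real.add_one_le_exp (iterExp j M)
    simp only [iterExp]
    linarith

lemma chain_bound (n k : ℕ) (S : ℝ) (hS : 0 < S) (hn : 1 ≤ n)
    (p : ℕ → ℝ) (hp : ∀ i : ℕ, i ≤ n → p i ∈ Set.Ioc (0 : ℝ) (1 / 2))
    (hrec : ∀ i : ℕ, i < n →
      p (i + 1) ≥ p i * gaussQ (Real.sqrt ((n : ℝ) * S / (2 * p i))))
    (hkn : k ≤ n) :
    ∀ j, k + j ≤ n →
      (n : ℝ) * S / (2 * p (k + j)) ≤ iterExp j (max ((n : ℝ) * S / (2 * p k)) 9) := by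
  have hN : (0:ℝ) < (n : ℝ) * S := by
    have : (1:ℝ) ≤ (n:ℝ) := by exact_mod_cast hn
    nlinarith
  set N := (n : ℝ) * S with hN_def
  set M := max (N / (2 * p k)) 9 with hM_def
  have hM9 : 9 ≤ M := le_max_right _ _
  intro j
  induction j with
  | zero =>
    intro _
    simp only [Nat.add_zero, iterExp, hM_def]
    exact le_max_left _ _
  | succ j ih =>
    intro hj
    have hj' : k + j ≤ n := by omega
    have hlt : k + j < n := by omega
    have ihv := ih hj'
    have hpi := hp (k + j) hj'
    have hpi0 : 0 < p (k + j) := hpi.1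
    have hx : 0 < N / (2 * p (k + j)) := by positivity
    set x := N / (2 * p (k + j)) with hx_def
    have hq := key_bound x hx
    have hr := hrec (k + j) hlt
    have hpx : p (k + j) * x = N / 2 := by
      rw [hx_def]; field_simp
    have hstep : N / 2 * Real.exp (-(max x 9)) ≤ p (k + j + 1) := by
      calc N / 2 * Real.exp (-(max x 9)) = p (k + j) * (x * Real.exp (-(max x 9))) := by
            rw [← hpx]; ring
        _ ≤ p (k + j) * gaussQ (Real.sqrt x) :=
            mul_le_mul_of_nonneg_left hq hpi0.le
        _ ≤ p (k + j + 1) := hr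
    have hd : 0 < N / 2 * Real.exp (-(max x 9)) := by positivity
    have hbound : N / (2 * p (k + j + 1)) ≤ Real.exp (max x 9) := by
      have h1 : N / (2 * p (k + j + 1)) ≤ N / (2 * (N / 2 * Real.exp (-(max x 9)))) := by
        apply div_le_div_of_nonneg_left hN.le (by positivity)
        linarith
      have h2 : N / (2 * (N / 2 * Real.exp (-(max x 9)))) = Real.exp (max x 9) := by
        rw [Real.exp_neg]
        field_simp
      rw [h2] at h1
      exact_mod_cast h1
    have hmax : max x 9 ≤ iterExp j M := by
      apply max_le ihv (iterExp_ge_nine hM9 j)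
    calc N / (2 * p (k + (j + 1))) = N / (2 * p (k + j + 1)) := by ring_nf
      _ ≤ Real.exp (max x 9) := hbound
      _ ≤ Real.exp (iterExp j M) := Real.exp_le_exp.mpr hmax
      _ = iterExp (j + 1) M := rfl


/-- **Unrolled iterated-exponential lower bound (eq. (26)).**
If `p₀, …, p_n ∈ (0, 1/2]` satisfy the recursion `p_i ≥ p_{i−1}·Q(√(nS/(2p_{i−1})))`,
then for `0 ≤ k < n`, `2p_n/(nS) ≥ 1/g_{n−k}(max{nS/(2p_k), 9})`; in particular, if
`p₀ = 1/2` then `p_n ≥ (nS/2)/g_n(max{nS, 9})`. -/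
theorem iterated_lower_bound
    (n : ℕ) (hn : 1 ≤ n) (k : ℕ) (hk : k < n) (S : ℝ) (hS : 0 < S)
    (p : ℕ → ℝ) (hp : ∀ i : ℕ, i ≤ n → p i ∈ Set.Ioc (0 : ℝ) (1 / 2))
    (hrec : ∀ i : ℕ, i < n →
      p (i + 1) ≥ p i * gaussQ (Real.sqrt ((n : ℝ) * S / (2 * p i)))) :
    2 * p n / ((n : ℝ) * S) ≥ 1 / iterExp (n - k) (max ((n : ℝ) * S / (2 * p k)) 9) ∧
    (p 0 = 1 / 2 → p n ≥ ((n : ℝ) * S / 2) / iterExp n (max ((n : ℝ) * S) 9)) := by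
  have hN : (0:ℝ) < (n : ℝ) * S := by
    have : (1:ℝ) ≤ (n:ℝ) := by exact_mod_cast hn
    nlinarith
  have hpn : 0 < p n := (hp n le_rfl).1
  constructor
  · have hc := chain_bound n k S hS hn p hp hrec hk.le (n - k) (by omega)
    rw [show k + (n - k) = n by omega] at hc
    have hx : 0 < (n:ℝ) * S / (2 * p n) := by positivity
    have h1 : 1 / iterExp (n - k) (max ((n : ℝ) * S / (2 * p k)) 9)
        ≤ 1 / ((n:ℝ) * S / (2 * p n)) := by
      apply one_div_le_one_div_of_le hx hc
    rw [one_div_div] at h1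
    exact h1
  · intro hp0
    have hc := chain_bound n 0 S hS hn p hp hrec (by omega) n (by omega)
    rw [show (0:ℕ) + n = n by omega] at hc
    rw [hp0] at hc
    have he : (n : ℝ) * S / (2 * (1/2)) = (n : ℝ) * S := by norm_num
    rw [he] at hc
    set G := iterExp n (max ((n : ℝ) * S) 9) with hG_def
    have hG9 : 9 ≤ G := iterExp_ge_nine (le_max_right _ _) n
    have hG0 : 0 < G := by linarith
    rw [ge_iff_le, div_le_iff₀ hG0]
    rw [div_le_iff₀ (by positivity : (0:ℝ) < 2 * p n)] at hc
    nlinarith
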